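/- Let w : [0,1] → ℝ be C¹ on [0,1] with w(1) = 0 and w'(0) = 0, and suppose (τ w'(τ))' = τ·h(τ)·w(τ) on (0,1) for some continuous h : [0,1] → ℝ with h(τ) ≥ 0. Then w is identically zero on [0,1]. -/
import Mathlib

theorem stmt_17 (w w' h : ℝ → ℝ)
    (hd : ∀ τ ∈ Set.Icc (0 : ℝ) 1, HasDerivAt w (w' τ) τ)
    (hw'c : ContinuousOn w' (Set.Icc 0 1))
    (hbc1 : w 1 = 0) (hbc0 : w' 0 = 0)
    (hhc : ContinuousOn h (Set.Icc 0 1)) (hh : ∀ τ ∈ Set.Icc (0 : ℝ) 1, 0 ≤ h τ)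
    (heq : ∀ τ ∈ Set.Ioo (0 : ℝ) 1,
      HasDerivAt (fun s => s * w' s) (τ * h τ * w τ) τ) :
    ∀ τ ∈ Set.Icc (0 : ℝ) 1, w τ = 0 := by
  have hwc : ContinuousOn w (Set.Icc 0 1) := fun x hx =>
    (hd x hx).continuousAt.continuousWithinAt
  -- g(τ) = (τ * w' τ) * w τ
  set g : ℝ → ℝ := fun τ => (τ * w' τ) * w τ with hg
  have hgc : ContinuousOn g (Set.Icc 0 1) :=
    ((continuousOn_id.mul hw'c).mul hwc)
  have hint : interior (Set.Icc (0:ℝ) 1) = Set.Ioo 0 1 := interior_Icc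
  have hgd : ∀ τ ∈ Set.Ioo (0:ℝ) 1,
      HasDerivAt g (τ * h τ * w τ * w τ + (τ * w' τ) * w' τ) τ := by
    intro τ hτ
    exact (heq τ hτ).mul (hd τ ⟨le_of_lt hτ.1, le_of_lt hτ.2⟩)
  have hgmono : MonotoneOn g (Set.Icc 0 1) := by
    apply monotoneOn_of_deriv_nonneg (convex_Icc 0 1) hgc
    · rw [hint]
      exact fun x hx => (hgd x hx).differentiableAt.differentiableWithinAt
    · intro x hx
      rw [hint] at hx
      rw [(hgd x hx).deriv]
      have h1 := hh x ⟨le_of_lt hx.1, le_of_lt hx.2⟩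
      nlinarith [sq_nonneg (w x), sq_nonneg (w' x), hx.1.le,
        mul_nonneg (mul_nonneg hx.1.le h1) (sq_nonneg (w x)),
        mul_nonneg hx.1.le (sq_nonneg (w' x))]
  have hg0 : g 0 = 0 := by simp [hg]
  have hgnn : ∀ τ ∈ Set.Icc (0:ℝ) 1, 0 ≤ g τ := by
    intro τ hτ
    have := hgmono (Set.left_mem_Icc.2 zero_le_one) hτ hτ.1
    rwa [hg0] at this
  -- F(τ) = w τ * w τ is monotone
  set F : ℝ → ℝ := fun τ => w τ * w τ with hF
  have hFd : ∀ τ ∈ Set.Icc (0:ℝ) 1,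
      HasDerivAt F (w' τ * w τ + w τ * w' τ) τ := fun τ hτ =>
    (hd τ hτ).mul (hd τ hτ)
  have hFmono : MonotoneOn F (Set.Icc 0 1) := by
    apply monotoneOn_of_deriv_nonneg (convex_Icc 0 1)
      (fun x hx => (hFd x hx).continuousAt.continuousWithinAt)
    · rw [hint]
      exact fun x hx =>
        (hFd x ⟨hx.1.le, hx.2.le⟩).differentiableAt.differentiableWithinAt
    · intro x hx
      rw [hint] at hx
      rw [(hFd x ⟨hx.1.le, hx.2.le⟩).deriv]
      have h1 := hgnn x ⟨hx.1.le, hx.2.le⟩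
      have h2 : 0 ≤ w' x * w x := by
        have : 0 ≤ x * (w' x * w x) := by simpa [hg, mul_assoc] using h1
        exact nonneg_of_mul_nonneg_right this hx.1
      nlinarith
  intro τ hτ
  have h1 : F τ ≤ F 1 := hFmono hτ (Set.right_mem_Icc.2 zero_le_one) hτ.2
  have h2 : F 1 = 0 := by simp [hF, hbc1]
  have h3 : 0 ≤ F τ := mul_self_nonneg _
  exact mul_self_eq_zero.mp (le_antisymm (h2 ▸ h1) h3)
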